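/- Let (V_{i,j}) be a point of SpR_{2n} such that V_{i,j} ∩ span(w_{j+1},…,w_{2n}) = 0 for all index pairs (i,j). Then for every index pair (i,j) with i < j one has V_{i,j} = (pr_j ∘ pr_{j−1} ∘ ⋯ ∘ pr_{i+1})(V_{i,i}). In particular, the forgetful map (V_{i,j}) ↦ (V_{1,1},…,V_{n,n}) is injective on the set of points of SpR_{2n} satisfying this condition. -/

import Mathlib

noncomputable section

/-- The ambient 2n-dimensional complex vector space `W = ℂ^{2n}`. -/
abbrev Wsp (n : ℕ) := Fin (2*n) → ℂ

/-- The basis vector `w_k` (1-based index `k ∈ {1,…,2n}`). -/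
def wvec (n k : ℕ) : Wsp n := fun i => if (i : ℕ) + 1 = k then 1 else 0

/-- The standard symplectic form: `⟨w_i, w_{2n+1-i}⟩ = 1` for `1 ≤ i ≤ n`,
and `⟨w_i, w_j⟩ = 0` for `j ≠ 2n+1-i`. -/
def sform (n : ℕ) (x y : Wsp n) : ℂ :=
  ∑ i : Fin (2*n), (if (i : ℕ) < n then 1 else -1) * x i *
    y ⟨2*n - 1 - (i : ℕ), by have := i.isLt; omega⟩

/-- A subspace is isotropic if the symplectic form vanishes on it. -/
def IsIsotropic (n : ℕ) (U : Submodule ℂ (Wsp n)) : Prop :=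
  ∀ u ∈ U, ∀ v ∈ U, sform n u v = 0

/-- The projection `pr_k` along `w_k` (1-based). -/
def prj (n k : ℕ) : Wsp n →ₗ[ℂ] Wsp n where
  toFun x := fun i => if (i : ℕ) + 1 = k then 0 else x i
  map_add' x y := by funext i; by_cases h : (i : ℕ) + 1 = k <;> simp [h]
  map_smul' c x := by funext i; by_cases h : (i : ℕ) + 1 = k <;> simp [h]

/-- The subspace `W_{i,j} = span(w_1,…,w_i,w_{j+1},…,w_{2n})` (1-based). -/
def WIJ (n i j : ℕ) : Submodule ℂ (Wsp n) :=
  Submodule.span ℂ (wvec n '' {k | (1 ≤ k ∧ k ≤ i) ∨ (j + 1 ≤ k ∧ k ≤ 2*n)})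

/-- Orthogonal complement with respect to the symplectic form. -/
def sperp (n : ℕ) (U : Submodule ℂ (Wsp n)) : Submodule ℂ (Wsp n) where
  carrier := {x | ∀ u ∈ U, sform n x u = 0}
  zero_mem' := by intro u hu; simp [sform]
  add_mem' := by
    intro a b ha hb u hu
    have ha' := ha u hu
    have hb' := hb u hu
    simp only [sform, Pi.add_apply, add_mul, mul_add, Finset.sum_add_distrib] at *
    rw [ha', hb', add_zero]
  smul_mem' := by
    intro c a ha u hu
    have ha' := ha u hu
    simp only [sform, Pi.smul_apply, smul_eq_mul] at *
    calc ∑ i : Fin (2*n), (if (i : ℕ) < n then 1 else -1) * (c * a i) *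
          u ⟨2*n - 1 - (i : ℕ), by have := i.isLt; omega⟩
        = c * ∑ i : Fin (2*n), (if (i : ℕ) < n then 1 else -1) * a i *
          u ⟨2*n - 1 - (i : ℕ), by have := i.isLt; omega⟩ := by
          rw [Finset.mul_sum]; congr 1; funext i; ring
      _ = 0 := by rw [ha', mul_zero]

/-- The points of the Bott–Samelson type resolution `SpR_{2n}`:
collections `(V_{i,j})` for `1 ≤ i ≤ j`, `i+j ≤ 2n`. -/
structure IsSpR (n : ℕ) (V : ℕ → ℕ → Submodule ℂ (Wsp n)) : Prop where
  dim : ∀ i j, 1 ≤ i → i ≤ j → i + j ≤ 2*n → Module.finrank ℂ (V i j) = i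
  sub : ∀ i j, 1 ≤ i → i ≤ j → i + j ≤ 2*n → V i j ≤ WIJ n i j
  mono : ∀ i j, 1 ≤ i → i + 1 ≤ j → (i + 1) + j ≤ 2*n → V i j ≤ V (i+1) j
  proj : ∀ i j, 1 ≤ i → i ≤ j → i + (j+1) ≤ 2*n →
    Submodule.map (prj n (j+1)) (V i j) ≤ V i (j+1)
  isot : ∀ i, 1 ≤ i → i ≤ n → IsIsotropic n (V i (2*n - i))

/-- A point of `SpR_{2n}` lies in the divisor `Z_{i,j}` if
`V_{i,j} = V_{i-1,j+1} + ℂ w_{j+1}` (with `V_0 = 0`). -/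
def InZ (n : ℕ) (V : ℕ → ℕ → Submodule ℂ (Wsp n)) (i j : ℕ) : Prop :=
  V i j = (if i = 1 then ⊥ else V (i-1) (j+1)) ⊔ Submodule.span ℂ {wvec n (j+1)}

/-- The composite projection `pr_b ∘ pr_{b-1} ∘ ⋯ ∘ pr_a` (identity if `b < a`). -/
def prChainRev (n a b : ℕ) : Wsp n →ₗ[ℂ] Wsp n :=
  (((List.range' a (b + 1 - a)).map (prj n)).foldl (fun f g => g ∘ₗ f) LinearMap.id)


lemma prChainRev_self (n a : ℕ) : prChainRev n a a = prj n a := by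
  unfold prChainRev
  rw [show a + 1 - a = 1 by omega, List.range'_one]
  simp

lemma prChainRev_succ (n a b : ℕ) (h : a ≤ b + 1) :
    prChainRev n a (b + 1) = (prj n (b + 1)) ∘ₗ prChainRev n a b := by
  unfold prChainRev
  have h1 : b + 1 + 1 - a = (b + 1 - a) + 1 := by omega
  rw [h1, List.range'_concat, List.map_append, List.foldl_append]
  have h2 : a + 1 * (b + 1 - a) = b + 1 := by omega
  rw [h2]
  simp

lemma spr_key (n : ℕ) (V : ℕ → ℕ → Submodule ℂ (Wsp n)) (hV : IsSpR n V)
    (hcell : ∀ i j, 1 ≤ i → i ≤ j → i + j ≤ 2*n → V i j ⊓ WIJ n 0 j = ⊥)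
    (i j : ℕ) (h1 : 1 ≤ i) (hij : i ≤ j) (hsum : i + (j+1) ≤ 2*n) :
    V i (j+1) = Submodule.map (prj n (j+1)) (V i j) := by
  have hle := hV.proj i j h1 hij hsum
  refine (Submodule.eq_of_le_of_finrank_le hle ?_).symm
  have hj2n : j < 2*n := by omega
  have hinj : Function.Injective ((prj n (j+1)) ∘ₗ (V i j).subtype) := by
    rw [← LinearMap.ker_eq_bot, LinearMap.ker_eq_bot']
    intro x hx
    have hx' : prj n (j+1) (x : Wsp n) = 0 := hx
    have hxspan : (x : Wsp n) ∈ WIJ n 0 j := by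
      have hxeq : (x : Wsp n) = ((x : Wsp n) ⟨j, hj2n⟩) • wvec n (j+1) := by
        funext idx
        have := congrFun hx' idx
        simp only [prj, LinearMap.coe_mk, AddHom.coe_mk] at this
        by_cases h : (idx : ℕ) + 1 = j + 1
        · have : idx = ⟨j, hj2n⟩ := by
            apply Fin.ext
            show (idx : ℕ) = j
            omega
          subst this
          simp [wvec]
        · simp only [h, if_false] at this
          simp [wvec, h, this, show ¬ (idx : ℕ) = j by omega]
      rw [hxeq]
      refine Submodule.smul_mem _ _ (Submodule.subset_span ?_)
      exact ⟨j+1, by simp; omega, rfl⟩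
    have : (x : Wsp n) ∈ V i j ⊓ WIJ n 0 j := ⟨x.2, hxspan⟩
    rw [hcell i j h1 hij (by omega)] at this
    exact Subtype.ext this
  have hrange : Submodule.map (prj n (j+1)) (V i j)
      = LinearMap.range ((prj n (j+1)) ∘ₗ (V i j).subtype) := by
    rw [LinearMap.range_comp, Submodule.range_subtype]
  rw [hV.dim i (j+1) h1 (by omega) hsum, hrange,
    LinearMap.finrank_range_of_inj hinj, hV.dim i j h1 hij (by omega)]

lemma spr_main1 (n : ℕ) (V : ℕ → ℕ → Submodule ℂ (Wsp n)) (hV : IsSpR n V)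
    (hcell : ∀ i j, 1 ≤ i → i ≤ j → i + j ≤ 2*n → V i j ⊓ WIJ n 0 j = ⊥) :
    ∀ i j, 1 ≤ i → i < j → i + j ≤ 2*n →
      V i j = Submodule.map (prChainRev n (i + 1) j) (V i i) := by
  intro i j h1 hij
  induction j, hij using Nat.le_induction with
  | base =>
    intro hsum
    rw [spr_key n V hV hcell i i h1 le_rfl hsum, prChainRev_self]
  | succ j hj ih =>
    intro hsum
    rw [spr_key n V hV hcell i j h1 (by omega) hsum,
      ih (by omega), prChainRev_succ n (i+1) j (by omega),
      Submodule.map_comp]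

theorem statement6 (n : ℕ) (hn : 1 ≤ n)
    (V : ℕ → ℕ → Submodule ℂ (Wsp n)) (hV : IsSpR n V)
    (hcell : ∀ i j, 1 ≤ i → i ≤ j → i + j ≤ 2*n → V i j ⊓ WIJ n 0 j = ⊥) :
    (∀ i j, 1 ≤ i → i < j → i + j ≤ 2*n →
      V i j = Submodule.map (prChainRev n (i + 1) j) (V i i)) ∧
    (∀ V' : ℕ → ℕ → Submodule ℂ (Wsp n), IsSpR n V' →
      (∀ i j, 1 ≤ i → i ≤ j → i + j ≤ 2*n → V' i j ⊓ WIJ n 0 j = ⊥) →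
      (∀ i, 1 ≤ i → i ≤ n → V i i = V' i i) →
      ∀ i j, 1 ≤ i → i ≤ j → i + j ≤ 2*n → V i j = V' i j) := by
  constructor
  · exact fun i j h1 hij hsum => spr_main1 n V hV hcell i j h1 hij hsum
  · intro V' hV' hcell' hsame i j h1 hij hsum
    rcases eq_or_lt_of_le hij with rfl | hlt
    · exact hsame i h1 (by omega)
    · rw [spr_main1 n V hV hcell i j h1 hlt hsum,
        spr_main1 n V' hV' hcell' i j h1 hlt hsum,
        hsame i h1 (by omega)]
end
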